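/- For every ε ∈ {1,−1} and every ν ∈ ℝ (including ν ∈ ℤ_{−ε}), the deformed module Π(ε,ν) admits an invariant Hermitian form ⟨·,·⟩ satisfying ⟨v_i, v_j⟩ = 0 for all i ≠ j in ℤ_ε and ⟨v_j, v_j⟩ ∈ {1, −1} for all j ∈ ℤ_ε; in particular this form is nondegenerate. -/

import Mathlib

namespace SL2Deform

/-- The index set `ℤ_ε = {j : ℤ | (-1)^j = ε}`, for a sign `ε ∈ {1, -1}`
(i.e. a unit of `ℤ`). -/
abbrev idx (ε : ℤˣ) : Type := {j : ℤ // (-1 : ℤˣ) ^ j = ε}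

/-- `V ε`: the complex vector space of finitely supported functions on `ℤ_ε`,
with standard basis `{v_j}`. -/
abbrev V (ε : ℤˣ) : Type := idx ε →₀ ℂ

/-- The standard basis vector `v_j` of `V ε`, for `j ∈ ℤ_ε`. -/
noncomputable def bv (ε : ℤˣ) (j : ℤ) (h : (-1 : ℤˣ) ^ j = ε) : V ε :=
  Finsupp.single ⟨j, h⟩ 1

lemma parity_two : (-1 : ℤˣ) ^ (2 : ℤ) = 1 := by decide
lemma parity_neg_two : (-1 : ℤˣ) ^ (-2 : ℤ) = 1 := by decide
lemma parity_zero : (-1 : ℤˣ) ^ (0 : ℤ) = 1 := by decide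

lemma parity_shift {ε : ℤˣ} {j : ℤ} (h : (-1 : ℤˣ) ^ j = ε) {s : ℤ}
    (hs : (-1 : ℤˣ) ^ s = 1) : (-1 : ℤˣ) ^ (j + s) = ε := by
  rw [zpow_add, h, hs, mul_one]

/-- If `m ∈ ℤ_{-ε}` then `m + 1 ∈ ℤ_ε`. -/
lemma parity_succ {ε : ℤˣ} {m : ℤ} (h : (-1 : ℤˣ) ^ m = -ε) :
    (-1 : ℤˣ) ^ (m + 1) = ε := by
  rw [zpow_add, h, zpow_one]
  simp

/-- If `m ∈ ℤ_{-ε}` then `m - 1 ∈ ℤ_ε`. -/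
lemma parity_pred {ε : ℤˣ} {m : ℤ} (h : (-1 : ℤˣ) ^ m = -ε) :
    (-1 : ℤˣ) ^ (m - 1) = ε := by
  rw [sub_eq_add_neg, zpow_add, h, zpow_neg, zpow_one]
  simp

/-- The linear operator on `V ε` sending `v_j` to `c j • v_{j+s}`,
for an even shift `s`. -/
noncomputable def shiftOp (ε : ℤˣ) (s : ℤ) (hs : (-1 : ℤˣ) ^ s = 1) (c : ℤ → ℂ) :
    V ε →ₗ[ℂ] V ε :=
  Finsupp.lsum ℂ fun j =>
    LinearMap.toSpanSingleton ℂ (V ε)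
      (Finsupp.single ⟨j.1 + s, parity_shift j.2 hs⟩ (c j.1))

/-- `H v_j = j • v_j`. -/
noncomputable def Hop (ε : ℤˣ) : V ε →ₗ[ℂ] V ε :=
  shiftOp ε 0 parity_zero fun j => (j : ℂ)

/-- Principal series: `E v_j = ½(ν + j + 1) • v_{j+2}`. -/
noncomputable def Eop (ε : ℤˣ) (ν : ℂ) : V ε →ₗ[ℂ] V ε :=
  shiftOp ε 2 parity_two fun j => (1 / 2 : ℂ) * (ν + j + 1)

/-- Principal series: `F v_j = ½(ν - j + 1) • v_{j-2}`. -/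
noncomputable def Fop (ε : ℤˣ) (ν : ℂ) : V ε →ₗ[ℂ] V ε :=
  shiftOp ε (-2) parity_neg_two fun j => (1 / 2 : ℂ) * (ν - j + 1)

/-- `f_m(ν) = ½ |ν²-m²|^{1/2} (ν+m)/|ν+m|` for `ν ≠ -m`, and `f_m(-m) = 0`. -/
noncomputable def fm (m : ℤ) (ν : ℂ) : ℂ :=
  if ν = -(m : ℂ) then 0
  else (1 / 2 : ℂ) * (Real.sqrt (‖ν ^ 2 - (m : ℂ) ^ 2‖) : ℝ) * (ν + m) /
    (‖ν + (m : ℂ)‖ : ℝ)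

/-- Deformed module: `E v_{m-1} = f_m(ν) • v_{m+1}`, i.e. `E v_j = f_{j+1}(ν) • v_{j+2}`. -/
noncomputable def PEop (ε : ℤˣ) (ν : ℂ) : V ε →ₗ[ℂ] V ε :=
  shiftOp ε 2 parity_two fun j => fm (j + 1) ν

/-- Deformed module: `F v_{m+1} = f_{-m}(ν) • v_{m-1}`, i.e. `F v_j = f_{-(j-1)}(ν) • v_{j-2}`. -/
noncomputable def PFop (ε : ℤˣ) (ν : ℂ) : V ε →ₗ[ℂ] V ε :=
  shiftOp ε (-2) parity_neg_two fun j => fm (1 - j) ν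

/-- The module `π'(ε,ν)`: `E v_{m-1} = ½(ν - |m|) • v_{m+1}`,
i.e. `E v_j = ½(ν - |j+1|) • v_{j+2}`. -/
noncomputable def E'op (ε : ℤˣ) (ν : ℂ) : V ε →ₗ[ℂ] V ε :=
  shiftOp ε 2 parity_two fun j => (1 / 2 : ℂ) * (ν - ((|j + 1| : ℤ) : ℂ))

/-- The module `π'(ε,ν)`: `F v_{m+1} = ½(ν + |m|) • v_{m-1}`,
i.e. `F v_j = ½(ν + |j-1|) • v_{j-2}`. -/
noncomputable def F'op (ε : ℤˣ) (ν : ℂ) : V ε →ₗ[ℂ] V ε :=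
  shiftOp ε (-2) parity_neg_two fun j => (1 / 2 : ℂ) * (ν + ((|j - 1| : ℤ) : ℂ))

/-- `ν ∈ ℤ_{-ε}`: `ν` is an integer with `(-1)^ν = -ε`. -/
def inZminus (ε : ℤˣ) (ν : ℂ) : Prop :=
  ∃ n : ℤ, ν = (n : ℂ) ∧ (-1 : ℤˣ) ^ n = -ε

section ModuleNotions

variable {M : Type*} [AddCommGroup M] [Module ℂ M]
variable {N : Type*} [AddCommGroup N] [Module ℂ N]

/-- `W` is a submodule for the module with operators `A, B, C`: it is invariant
under all three operators. -/
def Invariant (A B C : M →ₗ[ℂ] M) (W : Submodule ℂ M) : Prop :=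
  (∀ x ∈ W, A x ∈ W) ∧ (∀ x ∈ W, B x ∈ W) ∧ (∀ x ∈ W, C x ∈ W)

/-- The module with operators `A, B, C` is irreducible: its only submodules are
`0` and the whole space. -/
def IsIrreducibleRep (A B C : M →ₗ[ℂ] M) : Prop :=
  ∀ W : Submodule ℂ M, Invariant A B C W → W = ⊥ ∨ W = ⊤

/-- `W` is an irreducible submodule: invariant, nonzero, and with no nonzero
proper invariant subspace. -/
def IsIrreducibleSubmodule (A B C : M →ₗ[ℂ] M) (W : Submodule ℂ M) : Prop :=
  Invariant A B C W ∧ W ≠ ⊥ ∧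
    ∀ U : Submodule ℂ M, Invariant A B C U → U ≤ W → U = ⊥ ∨ U = W

/-- The module with operators `A, B, C` is completely reducible: every invariant
subspace has an invariant complement. -/
def CompletelyReducible (A B C : M →ₗ[ℂ] M) : Prop :=
  ∀ W : Submodule ℂ M, Invariant A B C W →
    ∃ U : Submodule ℂ M, Invariant A B C U ∧ IsCompl W U

/-- The two modules (given by operator triples) are isomorphic. -/
def Intertwined (A B C : M →ₗ[ℂ] M) (A' B' C' : N →ₗ[ℂ] N) : Prop :=
  ∃ e : M ≃ₗ[ℂ] N, (∀ x, e (A x) = A' (e x)) ∧ (∀ x, e (B x) = B' (e x)) ∧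
    (∀ x, e (C x) = C' (e x))

/-- An invariant Hermitian form for the module with operators `A, B, C`
(`A` playing the role of `H`, `B` of `E`, `C` of `F`): a sesquilinear form,
conjugate-symmetric, with `⟨Hv,w⟩ = ⟨v,Hw⟩`, `⟨Ev,w⟩ + ⟨v,Fw⟩ = 0`,
`⟨Fv,w⟩ + ⟨v,Ew⟩ = 0`. -/
structure IsInvHermForm (A B C : M →ₗ[ℂ] M) (Φ : M → M → ℂ) : Prop where
  add_left : ∀ u v w, Φ (u + v) w = Φ u w + Φ v w
  smul_left : ∀ (a : ℂ) (v w : M), Φ (a • v) w = a * Φ v w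
  conj_symm : ∀ v w, Φ w v = (starRingEnd ℂ) (Φ v w)
  inv_A : ∀ v w, Φ (A v) w = Φ v (A w)
  inv_BC : ∀ v w, Φ (B v) w + Φ v (C w) = 0
  inv_CB : ∀ v w, Φ (C v) w + Φ v (B w) = 0

end ModuleNotions

/-- `span{v_j : j ≥ n}`. -/
noncomputable def spanGE (ε : ℤˣ) (n : ℤ) : Submodule ℂ (V ε) :=
  Submodule.span ℂ {x : V ε | ∃ j : idx ε, n ≤ j.1 ∧ x = Finsupp.single j 1}

/-- `span{v_j : j ≤ n}`. -/
noncomputable def spanLE (ε : ℤˣ) (n : ℤ) : Submodule ℂ (V ε) :=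
  Submodule.span ℂ {x : V ε | ∃ j : idx ε, j.1 ≤ n ∧ x = Finsupp.single j 1}

/-- `span{v_j : |j| ≤ n}`. -/
noncomputable def spanAbsLE (ε : ℤˣ) (n : ℤ) : Submodule ℂ (V ε) :=
  Submodule.span ℂ {x : V ε | ∃ j : idx ε, |j.1| ≤ n ∧ x = Finsupp.single j 1}

/-- The diagonal operator `S v_j = c j • v_j`. -/
noncomputable def diagMap (ε : ℤˣ) (c : idx ε → ℂ) : V ε →ₗ[ℂ] V ε :=
  Finsupp.lsum ℂ fun j => LinearMap.toSpanSingleton ℂ (V ε) (Finsupp.single j (c j))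

noncomputable def sfac (ν : ℝ) (m : ℤ) : ℂ := if (m:ℝ)^2 < ν^2 then -1 else 1

noncomputable def dsgn (ν : ℝ) (j : ℤ) : ℂ :=
  if 2 ≤ j then sfac ν (j-1) * dsgn ν (j-2)
  else if j ≤ -1 then sfac ν (j+1) * dsgn ν (j+2)
  else 1
termination_by (2*j - 1).natAbs
decreasing_by all_goals omega

lemma sfac_unit (ν : ℝ) (m : ℤ) : sfac ν m = 1 ∨ sfac ν m = -1 := by
  unfold sfac; split <;> simp

lemma dsgn_unit (ν : ℝ) (j : ℤ) : dsgn ν j = 1 ∨ dsgn ν j = -1 := by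
  induction j using dsgn.induct with
  | case1 j h ih =>
    rw [dsgn, if_pos h]
    rcases sfac_unit ν (j-1) with h1 | h1 <;> rcases ih with h2 | h2 <;> simp [h1, h2]
  | case2 j h h' ih =>
    rw [dsgn, if_neg h, if_pos h']
    rcases sfac_unit ν (j+1) with h1 | h1 <;> rcases ih with h2 | h2 <;> simp [h1, h2]
  | case3 j h h' => rw [dsgn, if_neg h, if_neg h']; left; rfl

lemma sfac_sq (ν : ℝ) (m : ℤ) : sfac ν m * sfac ν m = 1 := by
  unfold sfac; split <;> norm_num

lemma dsgn_rec (ν : ℝ) (j : ℤ) : dsgn ν (j+2) = sfac ν (j+1) * dsgn ν j := by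
  by_cases h : 0 ≤ j
  · rw [dsgn, if_pos (by omega), show j+2-1 = j+1 by ring, show j+2-2 = j by ring]
  · conv_rhs => rw [dsgn, if_neg (by omega), if_pos (by omega)]
    rw [← mul_assoc, sfac_sq, one_mul]
noncomputable def fR (ν : ℝ) (m : ℤ) : ℝ :=
  if ν = -(m:ℝ) then 0 else (1/2) * Real.sqrt |ν^2 - (m:ℝ)^2| * (ν + m) / |ν + m|

lemma fm_eq (m : ℤ) (ν : ℝ) : fm m ↑ν = ((fR ν m : ℝ) : ℂ) := by
  unfold fm fR
  by_cases h : ν = -(m:ℝ)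
  · rw [if_pos (by push_cast [h]; ring), if_pos h, Complex.ofReal_zero]
  · rw [if_neg (by intro hc; apply h; exact_mod_cast hc), if_neg h]
    have h1 : ((ν:ℂ)^2 - (m:ℂ)^2) = ((ν^2 - (m:ℝ)^2 : ℝ) : ℂ) := by push_cast; ring
    have h2 : ((ν:ℂ) + (m:ℂ)) = ((ν + (m:ℝ) : ℝ) : ℂ) := by push_cast; ring
    rw [h1, h2, Complex.norm_real, Complex.norm_real, Real.norm_eq_abs, Real.norm_eq_abs]
    push_cast
    ring

lemma fR_sq (ν : ℝ) (m : ℤ) : fR ν m ^ 2 = |ν^2 - (m:ℝ)^2| / 4 := by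
  unfold fR
  by_cases h : ν = -(m:ℝ)
  · rw [if_pos h, h]
    norm_num
  · rw [if_neg h]
    have h3 : ν + (m:ℝ) ≠ 0 := fun hc => h (by linarith)
    rw [div_pow, mul_pow, mul_pow, Real.sq_sqrt (abs_nonneg _), sq_abs]
    field_simp
    ring

lemma fR_mul (ν : ℝ) (m : ℤ) : fR ν m * fR ν (-m) = (ν^2 - (m:ℝ)^2)/4 := by
  have hm : ((-m : ℤ):ℝ) = -(m:ℝ) := by push_cast; ring
  by_cases h1 : ν = -(m:ℝ)
  · rw [fR, if_pos h1, h1]; norm_num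
  · by_cases h2 : ν = (m:ℝ)
    · rw [show fR ν (-m) = 0 by rw [fR, if_pos (by rw [hm, neg_neg]; exact h2)], h2]
      norm_num
    · rw [fR, fR, hm, if_neg h1, if_neg (by rw [neg_neg]; exact h2)]
      have h3 : ν + (m:ℝ) ≠ 0 := fun hc => h1 (by linarith)
      have h4 : ν - (m:ℝ) ≠ 0 := fun hc => h2 (by linarith)
      have h5 : (-(m:ℝ))^2 = (m:ℝ)^2 := by ring
      have h6 : Real.sqrt |ν^2 - (m:ℝ)^2| * Real.sqrt |ν^2 - (m:ℝ)^2| = |ν^2 - (m:ℝ)^2| :=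
        Real.mul_self_sqrt (abs_nonneg _)
      have h7 : |ν + (m:ℝ)| * |ν - (m:ℝ)| = |ν^2 - (m:ℝ)^2| := by
        rw [← abs_mul]; ring_nf
      have h8 : |ν + (m:ℝ)| ≠ 0 := abs_ne_zero.mpr h3
      have h9 : |ν - (m:ℝ)| ≠ 0 := abs_ne_zero.mpr h4
      rw [h5, show ν + -(m:ℝ) = ν - m by ring]
      field_simp
      linear_combination (4*(ν^2-(m:ℝ)^2)) * (h6 - h7)

lemma keyR (ν : ℝ) (m : ℤ) :
    fR ν m * (if (m:ℝ)^2 < ν^2 then (-1:ℝ) else 1) + fR ν (-m) = 0 := by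
  by_cases he : ν^2 = (m:ℝ)^2
  · have e1 : fR ν m = 0 := by
      have := fR_sq ν m
      rw [he] at this
      simpa using pow_eq_zero_iff (n := 2) (by norm_num) |>.mp (by simpa using this)
    have e2 : fR ν (-m) = 0 := by
      have := fR_sq ν (-m)
      rw [show (((-m):ℤ):ℝ)^2 = (m:ℝ)^2 by push_cast; ring, he] at this
      simpa using pow_eq_zero_iff (n := 2) (by norm_num) |>.mp (by simpa using this)
    rw [e1, e2]; ring
  · have hf : fR ν m ≠ 0 := by
      intro h
      apply he
      have h2 := fR_sq ν m
      rw [h] at h2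
      have : |ν^2 - (m:ℝ)^2| = 0 := by linarith [h2]
      have := abs_eq_zero.mp this
      linarith
    have key2 : (fR ν m * (if (m:ℝ)^2 < ν^2 then (-1:ℝ) else 1) + fR ν (-m)) * fR ν m = 0 := by
      have : (fR ν m * (if (m:ℝ)^2 < ν^2 then (-1:ℝ) else 1) + fR ν (-m)) * fR ν m
          = fR ν m ^2 * (if (m:ℝ)^2 < ν^2 then (-1:ℝ) else 1) + fR ν m * fR ν (-m) := by ring
      rw [this, fR_sq, fR_mul]
      split_ifs with h
      · rw [abs_of_pos (by linarith)]; ring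
      · rw [abs_of_nonpos (by push_neg at h; linarith)]; ring
    exact (mul_eq_zero.mp key2).resolve_right hf

lemma fm_conj (m : ℤ) (ν : ℝ) : (starRingEnd ℂ) (fm m ↑ν) = fm m ↑ν := by
  rw [fm_eq, Complex.conj_ofReal]

lemma key (ν : ℝ) (m : ℤ) :
    fm m ↑ν * dsgn ν (m+1) + fm (-m) ↑ν * dsgn ν (m-1) = 0 := by
  have h1 : dsgn ν (m+1) = sfac ν m * dsgn ν (m-1) := by
    have := dsgn_rec ν (m-1)
    rwa [show m-1+2 = m+1 by ring, show m-1+1 = m by ring] at this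
  rw [h1, fm_eq, fm_eq, ← mul_assoc]
  have h2 : (fR ν m : ℂ) * sfac ν m + (fR ν (-m) : ℂ) = 0 := by
    have := keyR ν m
    unfold sfac
    split_ifs with h
    · rw [if_pos h] at this
      exact_mod_cast congrArg (fun x : ℝ => (x:ℂ)) this
    · rw [if_neg h] at this
      exact_mod_cast congrArg (fun x : ℝ => (x:ℂ)) this
  calc (fR ν m : ℂ) * sfac ν m * dsgn ν (m-1) + (fR ν (-m) : ℂ) * dsgn ν (m-1)
      = ((fR ν m : ℂ) * sfac ν m + (fR ν (-m) : ℂ)) * dsgn ν (m-1) := by ring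
    _ = 0 := by rw [h2, zero_mul]

lemma dsgn_conj (ν : ℝ) (j : ℤ) : (starRingEnd ℂ) (dsgn ν j) = dsgn ν j := by
  rcases dsgn_unit ν j with h | h <;> simp [h]

lemma dsgn_ne_zero (ν : ℝ) (j : ℤ) : dsgn ν j ≠ 0 := by
  rcases dsgn_unit ν j with h | h <;> simp [h]

lemma shiftOp_single (ε : ℤˣ) (s : ℤ) (hs : (-1:ℤˣ)^s = 1) (c : ℤ → ℂ) (j : idx ε) (a : ℂ) :
    shiftOp ε s hs c (Finsupp.single j a)
      = Finsupp.single ⟨j.1+s, parity_shift j.2 hs⟩ (a * c j.1) := by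
  rw [shiftOp, Finsupp.lsum_single, LinearMap.toSpanSingleton_apply, Finsupp.smul_single,
    smul_eq_mul]

/-- The diagonal Hermitian form with signs `dsgn`. -/
noncomputable def Phi (ε : ℤˣ) (ν : ℝ) (v w : V ε) : ℂ :=
  v.sum fun j a => dsgn ν j.1 * a * (starRingEnd ℂ) (w j)

lemma Phi_zero_left (ε : ℤˣ) (ν : ℝ) (w : V ε) : Phi ε ν 0 w = 0 :=
  Finsupp.sum_zero_index

lemma Phi_zero_right (ε : ℤˣ) (ν : ℝ) (v : V ε) : Phi ε ν v 0 = 0 := by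
  simp [Phi]

lemma Phi_add_left (ε : ℤˣ) (ν : ℝ) (v v' w : V ε) :
    Phi ε ν (v + v') w = Phi ε ν v w + Phi ε ν v' w :=
  Finsupp.sum_add_index' (by intro i; ring) (by intro i b c; ring)

lemma Phi_smul_left (ε : ℤˣ) (ν : ℝ) (a : ℂ) (v w : V ε) :
    Phi ε ν (a • v) w = a * Phi ε ν v w := by
  rw [Phi, Finsupp.sum_smul_index' (by intro i; ring), Phi, Finsupp.mul_sum]
  apply Finsupp.sum_congr
  intro i _
  simp only [smul_eq_mul]
  ring

lemma Phi_add_right (ε : ℤˣ) (ν : ℝ) (v w w' : V ε) :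
    Phi ε ν v (w + w') = Phi ε ν v w + Phi ε ν v w' := by
  rw [Phi, Phi, Phi, ← Finsupp.sum_add]
  apply Finsupp.sum_congr
  intro i _
  simp only [Finsupp.add_apply, map_add]
  ring

lemma Phi_single_left (ε : ℤˣ) (ν : ℝ) (i : idx ε) (a : ℂ) (w : V ε) :
    Phi ε ν (Finsupp.single i a) w = dsgn ν i.1 * a * (starRingEnd ℂ) (w i) := by
  rw [Phi, Finsupp.sum_single_index (by ring)]

lemma Phi_single_single (ε : ℤˣ) (ν : ℝ) (i j : idx ε) (a b : ℂ) :
    Phi ε ν (Finsupp.single i a) (Finsupp.single j b)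
      = if j = i then dsgn ν i.1 * a * (starRingEnd ℂ) b else 0 := by
  rw [Phi_single_left, Finsupp.single_apply]
  split_ifs <;> simp

lemma reduce2 {ε : ℤˣ} {Ψ : V ε → V ε → ℂ}
    (hL0 : ∀ w, Ψ 0 w = 0) (hLadd : ∀ v v' w, Ψ (v + v') w = Ψ v w + Ψ v' w)
    (hR0 : ∀ v, Ψ v 0 = 0) (hRadd : ∀ v w w', Ψ v (w + w') = Ψ v w + Ψ v w')
    (hss : ∀ (i j : idx ε) (a b : ℂ), Ψ (Finsupp.single i a) (Finsupp.single j b) = 0) :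
    ∀ v w, Ψ v w = 0 := by
  have hsingle : ∀ (i : idx ε) (a : ℂ) (w : V ε), Ψ (Finsupp.single i a) w = 0 := by
    intro i a w
    refine Finsupp.induction w (hR0 _) ?_
    intro j b f _ _ ih
    rw [hRadd, hss, ih, add_zero]
  intro v w
  refine Finsupp.induction v (hL0 w) ?_
  intro i a f _ _ ih
  rw [hLadd, hsingle, ih, add_zero]

lemma Phi_conj_symm (ε : ℤˣ) (ν : ℝ) (v w : V ε) :
    Phi ε ν w v = (starRingEnd ℂ) (Phi ε ν v w) := by
  rw [← sub_eq_zero]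
  refine reduce2 (Ψ := fun v w => Phi ε ν w v - (starRingEnd ℂ) (Phi ε ν v w))
    (fun w => by rw [Phi_zero_right, Phi_zero_left, map_zero, sub_zero])
    (fun v v' w => by rw [Phi_add_right, Phi_add_left, map_add]; ring)
    (fun v => by rw [Phi_zero_left, Phi_zero_right, map_zero, sub_zero])
    (fun v w w' => by rw [Phi_add_left, Phi_add_right, map_add]; ring)
    ?_ v w
  intro i j a b
  rw [Phi_single_single, Phi_single_single]
  by_cases h : i = j
  · subst h
    rw [if_pos rfl, if_pos rfl]
    simp only [map_mul, dsgn_conj, Complex.conj_conj]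
    ring
  · rw [if_neg h, if_neg (fun hc => h hc.symm), map_zero, sub_zero]


/-- For every `ε ∈ {1,-1}` and every real `ν` (including
`ν ∈ ℤ_{-ε}`), the deformed module `Π(ε,ν)` admits an invariant Hermitian form with
`⟨v_i,v_j⟩ = 0` for `i ≠ j` and `⟨v_j,v_j⟩ = ±1` for all `j`; in particular the form
is nondegenerate. -/
theorem deformed_herm_form_exists (ε : ℤˣ) (ν : ℝ) :
    ∃ Φ : V ε → V ε → ℂ,
      IsInvHermForm (Hop ε) (PEop ε (ν : ℂ)) (PFop ε (ν : ℂ)) Φ ∧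
      (∀ i j : idx ε, i ≠ j → Φ (Finsupp.single i 1) (Finsupp.single j 1) = 0) ∧
      (∀ j : idx ε, Φ (Finsupp.single j 1) (Finsupp.single j 1) = 1 ∨
        Φ (Finsupp.single j 1) (Finsupp.single j 1) = -1) ∧
      (∀ v : V ε, (∀ w : V ε, Φ v w = 0) → v = 0) := by
  refine ⟨Phi ε ν, ⟨Phi_add_left ε ν, Phi_smul_left ε ν, ?_, ?_, ?_, ?_⟩, ?_, ?_, ?_⟩
  · -- conj_symm
    exact Phi_conj_symm ε ν
  · -- inv_A
    intro v w
    rw [← sub_eq_zero]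
    refine reduce2 (Ψ := fun v w => Phi ε ν (Hop ε v) w - Phi ε ν v (Hop ε w))
      (fun w => by rw [map_zero, Phi_zero_left, Phi_zero_left, sub_zero])
      (fun v v' w => by rw [map_add, Phi_add_left, Phi_add_left]; ring)
      (fun v => by rw [map_zero, Phi_zero_right, Phi_zero_right, sub_zero])
      (fun v w w' => by rw [map_add, Phi_add_right, Phi_add_right]; ring)
      ?_ v w
    intro i j a b
    rw [Hop, shiftOp_single, shiftOp_single, Phi_single_single, Phi_single_single]
    by_cases h : j.1 = i.1
    · rw [if_pos (Subtype.ext (show (j.1 : ℤ) = i.1 + 0 by omega)),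
        if_pos (Subtype.ext (show (j.1 : ℤ) + 0 = i.1 by omega))]
      simp only [map_mul, map_intCast, h, add_zero]
      ring
    · rw [if_neg (fun hc => h (by simpa [Subtype.ext_iff] using hc)),
        if_neg (fun hc => h (by have := Subtype.ext_iff.mp hc; simp at this; omega)), sub_zero]
  · -- inv_BC
    intro v w
    refine reduce2 (Ψ := fun v w => Phi ε ν (PEop ε ↑ν v) w + Phi ε ν v (PFop ε ↑ν w))
      (fun w => by rw [map_zero, Phi_zero_left, Phi_zero_left, add_zero])
      (fun v v' w => by rw [map_add, Phi_add_left, Phi_add_left]; ring)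
      (fun v => by rw [map_zero, Phi_zero_right, Phi_zero_right, add_zero])
      (fun v w w' => by rw [map_add, Phi_add_right, Phi_add_right]; ring)
      ?_ v w
    intro i j a b
    rw [PEop, PFop, shiftOp_single, shiftOp_single, Phi_single_single, Phi_single_single]
    by_cases h : j.1 = i.1 + 2
    · rw [if_pos (Subtype.ext (show (j.1 : ℤ) = i.1 + 2 by omega)),
        if_pos (Subtype.ext (show (j.1 : ℤ) + -2 = i.1 by omega))]
      simp only [map_mul]
      rw [show (1 - j.1) = -(i.1 + 1) by omega, fm_conj]
      have hk := key ν (i.1 + 1)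
      rw [show i.1 + 1 + 1 = i.1 + 2 by ring, show i.1 + 1 - 1 = i.1 by ring] at hk
      linear_combination ((starRingEnd ℂ) b * a) * hk
    · rw [if_neg (fun hc => h (by have := Subtype.ext_iff.mp hc; simp at this; omega)),
        if_neg (fun hc => h (by have := Subtype.ext_iff.mp hc; simp at this; omega)), add_zero]
  · -- inv_CB
    intro v w
    refine reduce2 (Ψ := fun v w => Phi ε ν (PFop ε ↑ν v) w + Phi ε ν v (PEop ε ↑ν w))
      (fun w => by rw [map_zero, Phi_zero_left, Phi_zero_left, add_zero])
      (fun v v' w => by rw [map_add, Phi_add_left, Phi_add_left]; ring)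
      (fun v => by rw [map_zero, Phi_zero_right, Phi_zero_right, add_zero])
      (fun v w w' => by rw [map_add, Phi_add_right, Phi_add_right]; ring)
      ?_ v w
    intro i j a b
    rw [PFop, PEop, shiftOp_single, shiftOp_single, Phi_single_single, Phi_single_single]
    by_cases h : j.1 = i.1 - 2
    · rw [if_pos (Subtype.ext (show (j.1 : ℤ) = i.1 + -2 by omega)),
        if_pos (Subtype.ext (show (j.1 : ℤ) + 2 = i.1 by omega))]
      simp only [map_mul]
      rw [show (j.1 + 1) = (i.1 - 1) by omega, fm_conj,
        show (1 - i.1) = -(i.1 - 1) by omega,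
        show (i.1 + -2 : ℤ) = i.1 - 2 by ring]
      have hk := key ν (i.1 - 1)
      rw [show i.1 - 1 + 1 = (i.1 : ℤ) by ring, show i.1 - 1 - 1 = i.1 - 2 by ring] at hk
      linear_combination ((starRingEnd ℂ) b * a) * hk
    · rw [if_neg (fun hc => h (by have := Subtype.ext_iff.mp hc; simp at this; omega)),
        if_neg (fun hc => h (by have := Subtype.ext_iff.mp hc; simp at this; omega)), add_zero]
  · -- orthogonality
    intro i j hij
    rw [Phi_single_single, if_neg (fun hc => hij (Subtype.ext (Subtype.ext_iff.mp hc).symm))]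
  · -- diagonal values
    intro j
    rw [Phi_single_single, if_pos rfl]
    simpa using dsgn_unit ν j.1
  · -- nondegeneracy
    intro v hv
    ext j
    have h1 : Phi ε ν (Finsupp.single j 1) v = 0 := by
      rw [Phi_conj_symm, hv (Finsupp.single j 1), map_zero]
    rw [Phi_single_left, mul_one] at h1
    rcases mul_eq_zero.mp h1 with h | h
    · exact absurd h (dsgn_ne_zero ν j.1)
    · simpa using congrArg (starRingEnd ℂ) h
end SL2Deform
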